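/- Let r, β > 0 and L1, L2 be reals with e^r < L1 and L1 ≠ (L2·e^{β−r} + e^r)/(e^β + 1). Then the identity V2* := (L1 − e^r)²·e^{2r−β}/(e^β − 1) + (L2 − L1·e^r)²/(e^β − 1) equals ((e^{2r−β} + e^{2r})/(e^β − 1))·(L1 − (L2·e^{β−r} + e^r)/(e^β + 1))² + (L2 − e^{2r})²/(e^{2β} − 1). In particular V2* > (L2 − e^{2r})²/(e^{2β} − 1) whenever L1 ≠ (L2 e^{β−r} + e^r)/(e^β + 1). -/
import Mathlib


open Real

lemma key_aux (a b L1 L2 : ℝ) (ha : 0 < a) (hb : 1 < b)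
    (hne : L1 ≠ (L2 * (b / a) + a) / (b + 1)) :
    (L1 - a) ^ 2 * (a ^ 2 / b) / (b - 1) + (L2 - L1 * a) ^ 2 / (b - 1)
      = ((a ^ 2 / b + a ^ 2) / (b - 1)) * (L1 - (L2 * (b / a) + a) / (b + 1)) ^ 2
        + (L2 - a ^ 2) ^ 2 / (b ^ 2 - 1) ∧
    (L1 - a) ^ 2 * (a ^ 2 / b) / (b - 1) + (L2 - L1 * a) ^ 2 / (b - 1)
      > (L2 - a ^ 2) ^ 2 / (b ^ 2 - 1) := by
  have hb0 : (0:ℝ) < b := lt_trans one_pos hb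
  have hb1 : b - 1 ≠ 0 := by nlinarith
  have hb1' : b + 1 ≠ 0 := by nlinarith
  have hb2 : b ^ 2 - 1 ≠ 0 := by nlinarith
  have heq : (L1 - a) ^ 2 * (a ^ 2 / b) / (b - 1) + (L2 - L1 * a) ^ 2 / (b - 1)
      = ((a ^ 2 / b + a ^ 2) / (b - 1)) * (L1 - (L2 * (b / a) + a) / (b + 1)) ^ 2
        + (L2 - a ^ 2) ^ 2 / (b ^ 2 - 1) := by
    field_simp
    ring
  refine ⟨heq, ?_⟩
  rw [heq]
  have h1 : (0:ℝ) < (a ^ 2 / b + a ^ 2) / (b - 1) := by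
    apply div_pos (by positivity); linarith
  have h2 : (0:ℝ) < (L1 - (L2 * (b / a) + a) / (b + 1)) ^ 2 := by
    have := sub_ne_zero.mpr hne
    positivity
  nlinarith

theorem stmt_2 (r β L1 L2 : ℝ) (hr : 0 < r) (hβ : 0 < β)
    (hL1 : exp r < L1)
    (hne : L1 ≠ (L2 * exp (β - r) + exp r) / (exp β + 1)) :
    (L1 - exp r) ^ 2 * exp (2 * r - β) / (exp β - 1)
      + (L2 - L1 * exp r) ^ 2 / (exp β - 1)
    = ((exp (2 * r - β) + exp (2 * r)) / (exp β - 1)) *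
        (L1 - (L2 * exp (β - r) + exp r) / (exp β + 1)) ^ 2
      + (L2 - exp (2 * r)) ^ 2 / (exp (2 * β) - 1) ∧
    (L1 - exp r) ^ 2 * exp (2 * r - β) / (exp β - 1)
      + (L2 - L1 * exp r) ^ 2 / (exp β - 1)
    > (L2 - exp (2 * r)) ^ 2 / (exp (2 * β) - 1) := by
  have e1 : exp (2 * r - β) = (exp r) ^ 2 / exp β := by
    rw [exp_sub, ← exp_nat_mul]; norm_num
  have e2 : exp (2 * r) = (exp r) ^ 2 := by
    rw [← exp_nat_mul]; norm_num
  have e3 : exp (β - r) = exp β / exp r := exp_sub β r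
  have e4 : exp (2 * β) = (exp β) ^ 2 := by
    rw [← exp_nat_mul]; norm_num
  rw [e3] at hne
  rw [e1, e2, e3, e4]
  have hb : 1 < exp β := by have := Real.add_one_le_exp β; linarith
  exact key_aux (exp r) (exp β) L1 L2 (exp_pos r) hb hne
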